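/- Assume the right-sided M structure. Let c ∈ {0,1} with P(C=c) > 0. Then cov(X, Y | C=c) = [ P(Y=1 | B=1) − P(Y=1 | B=0) ] · cov(X, B | C=c); that is, the extended collider bias on the covariance scale equals the embedded V-bias cov(X, B | C=c) multiplied by the risk difference representing the effect of B on Y. -/

import Mathlib

open MeasureTheory ProbabilityTheory

variable {Ω : Type*} [MeasurableSpace Ω]

/-- The event that the random variable `X` takes the value `x`. -/
def ev (X : Ω → ℝ) (x : ℝ) : Set Ω := {ω | X ω = x}

/-- The probability of an event, as a real number. -/
noncomputable def pr (P : Measure Ω) (s : Set Ω) : ℝ := (P s).toReal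

/-- The conditional probability `P(s | t)`, as a real number. -/
noncomputable def cpr (P : Measure Ω) (s t : Set Ω) : ℝ := pr (P[|t]) s

/-- The covariance of two real-valued random variables. -/
noncomputable def rcov (P : Measure Ω) (X Y : Ω → ℝ) : ℝ :=
  ∫ ω, (X ω - ∫ ω', X ω' ∂P) * (Y ω - ∫ ω', Y ω' ∂P) ∂P

/-- The conditional covariance of two real-valued random variables given an event. -/
noncomputable def covCond (P : Measure Ω) (X Y : Ω → ℝ) (t : Set Ω) : ℝ :=
  rcov (P[|t]) X Y

/-- The conditional variance of a real-valued random variable given an event. -/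
noncomputable def varCond (P : Measure Ω) (X : Ω → ℝ) (t : Set Ω) : ℝ :=
  covCond P X X t

/-- A measurable `{0,1}`-valued random variable. -/
def IsBin (X : Ω → ℝ) : Prop := Measurable X ∧ ∀ ω, X ω = 0 ∨ X ω = 1

lemma meas_ev {X : Ω → ℝ} (hX : IsBin X) (x : ℝ) : MeasurableSet (ev X x) :=
  hX.1 (measurableSet_singleton x)

lemma pr_congr (P : Measure Ω) {s t : Set Ω} (h : s = t) : pr P s = pr P t := by rw [h]

lemma pr_split (P : Measure Ω) [IsFiniteMeasure P] {X : Ω → ℝ} (hX : IsBin X)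
    {s : Set Ω} (hs : MeasurableSet s) :
    pr P s = pr P (s ∩ ev X 0) + pr P (s ∩ ev X 1) := by
  have hu : s = (s ∩ ev X 0) ∪ (s ∩ ev X 1) := by
    ext ω; rcases hX.2 ω with h | h <;> simp [ev, h]
  have hd : Disjoint (s ∩ ev X 0) (s ∩ ev X 1) := by
    rw [Set.disjoint_iff]
    rintro ω ⟨⟨-, h0⟩, -, h1⟩
    simp only [ev, Set.mem_setOf_eq] at h0 h1
    norm_num [h0] at h1
  conv_lhs => rw [pr, hu]
  rw [measure_union hd (hs.inter (meas_ev hX 1)),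
    ENNReal.toReal_add (measure_ne_top _ _) (measure_ne_top _ _)]
  rfl

lemma bin_eq_indicator {X : Ω → ℝ} (hX : IsBin X) :
    X = (ev X 1).indicator (fun _ => (1:ℝ)) := by
  funext ω
  rcases hX.2 ω with h | h <;> simp [ev, Set.indicator_apply, h]

lemma integrable_bin (P : Measure Ω) [IsFiniteMeasure P] {X : Ω → ℝ} (hX : IsBin X) :
    Integrable X P := by
  rw [bin_eq_indicator hX]
  exact (integrable_const (1:ℝ)).indicator (meas_ev hX 1)

lemma integral_bin (P : Measure Ω) {X : Ω → ℝ} (hX : IsBin X) :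
    ∫ ω, X ω ∂P = pr P (ev X 1) := by
  conv_lhs => rw [bin_eq_indicator hX]
  rw [integral_indicator_const _ (meas_ev hX 1)]
  simp [pr]
  rfl

lemma bin_mul {X Y : Ω → ℝ} (hX : IsBin X) (hY : IsBin Y) :
    (fun ω => X ω * Y ω) = (ev X 1 ∩ ev Y 1).indicator (fun _ => (1:ℝ)) := by
  funext ω
  rcases hX.2 ω with h | h <;> rcases hY.2 ω with h' | h' <;>
    simp [ev, Set.indicator_apply, h, h']

lemma integral_bin_mul (P : Measure Ω) {X Y : Ω → ℝ} (hX : IsBin X) (hY : IsBin Y) :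
    ∫ ω, X ω * Y ω ∂P = pr P (ev X 1 ∩ ev Y 1) := by
  rw [bin_mul hX hY, integral_indicator_const _ ((meas_ev hX 1).inter (meas_ev hY 1))]
  simp [pr]
  rfl

lemma rcov_bin (P : Measure Ω) [IsProbabilityMeasure P] {X Y : Ω → ℝ}
    (hX : IsBin X) (hY : IsBin Y) :
    rcov P X Y = pr P (ev X 1 ∩ ev Y 1) - pr P (ev X 1) * pr P (ev Y 1) := by
  rw [rcov]
  set a := ∫ ω', X ω' ∂P with ha
  set b := ∫ ω', Y ω' ∂P with hb
  have key : ∀ ω, (X ω - a) * (Y ω - b) = X ω * Y ω - a * Y ω - b * X ω + a * b := by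
    intro ω; ring
  simp only [key]
  have hXi := integrable_bin P hX
  have hYi := integrable_bin P hY
  have hXYi : Integrable (fun ω => X ω * Y ω) P := by
    rw [bin_mul hX hY]
    exact (integrable_const (1:ℝ)).indicator ((meas_ev hX 1).inter (meas_ev hY 1))
  have I2 : Integrable (fun ω => X ω * Y ω - a * Y ω) P := hXYi.sub (hYi.const_mul a)
  have I3 : Integrable (fun ω => X ω * Y ω - a * Y ω - b * X ω) P := I2.sub (hXi.const_mul b)
  rw [integral_add I3 (integrable_const (a * b)),
    integral_sub I2 (hXi.const_mul b), integral_sub hXYi (hYi.const_mul a)]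
  simp only [integral_const_mul, integral_const]
  rw [integral_bin_mul P hX hY]
  have h1 : a = pr P (ev X 1) := by rw [ha]; exact integral_bin P hX
  have h2 : b = pr P (ev Y 1) := by rw [hb]; exact integral_bin P hY
  rw [show (∫ ω, X ω ∂P) = a from rfl, show (∫ ω, Y ω ∂P) = b from rfl, h1, h2]
  simp
  ring

lemma pr_cond (P : Measure Ω) [IsProbabilityMeasure P] {t : Set Ω} (ht : MeasurableSet t)
    (s : Set Ω) :
    pr (P[|t]) s = pr P (t ∩ s) / pr P t := by
  rw [pr, cond_apply ht, ENNReal.toReal_mul, ENNReal.toReal_inv]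
  rw [div_eq_inv_mul]
  rfl

lemma pr_compl (P : Measure Ω) [IsProbabilityMeasure P] {s : Set Ω} (hs : MeasurableSet s) :
    pr P sᶜ = 1 - pr P s := by
  rw [pr, prob_compl_eq_one_sub hs, pr,
    ENNReal.toReal_sub_of_le prob_le_one (by simp)]
  simp

lemma ev_zero_compl {X : Ω → ℝ} (hX : IsBin X) : ev X 0 = (ev X 1)ᶜ := by
  ext ω
  rcases hX.2 ω with h | h <;> simp [ev, h]

lemma pr_pos_ne {P : Measure Ω} {s : Set Ω} (h : 0 < pr P s) : P s ≠ 0 := by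
  intro h0
  simp [pr, h0] at h

set_option maxHeartbeats 1000000 in
/-- Right-sided M structure: the extended collider bias on the covariance scale equals the
embedded V-bias times the risk difference for the effect of `B` on `Y`. -/
theorem rightM_bias_cov (P : Measure Ω) [IsProbabilityMeasure P]
    (X B C Y : Ω → ℝ) (hX : IsBin X) (hB : IsBin B) (hC : IsBin C) (hY : IsBin Y)
    (hX1 : 0 < pr P (ev X 1)) (hX1' : pr P (ev X 1) < 1)
    (hB1 : 0 < pr P (ev B 1)) (hB1' : pr P (ev B 1) < 1)
    (hfact : ∀ x b γ y : ℝ, (x = 0 ∨ x = 1) → (b = 0 ∨ b = 1) → (γ = 0 ∨ γ = 1) →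
      (y = 0 ∨ y = 1) →
      pr P (ev X x ∩ ev B b ∩ ev C γ ∩ ev Y y) =
        pr P (ev X x) * pr P (ev B b) * cpr P (ev C γ) (ev X x ∩ ev B b) *
          cpr P (ev Y y) (ev B b))
    (c : ℝ) (hc : c = 0 ∨ c = 1) (hCc : 0 < pr P (ev C c)) :
    covCond P X Y (ev C c) =
      (cpr P (ev Y 1) (ev B 1) - cpr P (ev Y 1) (ev B 0)) * covCond P X B (ev C c) := by
  have mC : MeasurableSet (ev C c) := meas_ev hC c
  have mX0 : MeasurableSet (ev X 0) := meas_ev hX 0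
  have mX1 : MeasurableSet (ev X 1) := meas_ev hX 1
  have mB0 : MeasurableSet (ev B 0) := meas_ev hB 0
  have mB1 : MeasurableSet (ev B 1) := meas_ev hB 1
  have mY1 : MeasurableSet (ev Y 1) := meas_ev hY 1
  have hPt : P (ev C c) ≠ 0 := pr_pos_ne hCc
  have hT : pr P (ev C c) ≠ 0 := ne_of_gt hCc
  haveI : IsProbabilityMeasure (P[|ev C c]) := cond_isProbabilityMeasure hPt
  -- complement facts for B and Y
  have hB0eq : pr P (ev B 0) = 1 - pr P (ev B 1) := by
    rw [ev_zero_compl hB]; exact pr_compl P mB1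
  have hPb1 : P (ev B 1) ≠ 0 := pr_pos_ne hB1
  have hPb0 : P (ev B 0) ≠ 0 := pr_pos_ne (by rw [hB0eq]; linarith)
  have hq1c : cpr P (ev Y 0) (ev B 1) = 1 - cpr P (ev Y 1) (ev B 1) := by
    haveI : IsProbabilityMeasure (P[|ev B 1]) := cond_isProbabilityMeasure hPb1
    rw [cpr, cpr, ev_zero_compl hY, pr_compl _ mY1]
  have hq0c : cpr P (ev Y 0) (ev B 0) = 1 - cpr P (ev Y 1) (ev B 0) := by
    haveI : IsProbabilityMeasure (P[|ev B 0]) := cond_isProbabilityMeasure hPb0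
    rw [cpr, cpr, ev_zero_compl hY, pr_compl _ mY1]
  set q1 := cpr P (ev Y 1) (ev B 1) with hq1
  set q0 := cpr P (ev Y 1) (ev B 0) with hq0
  set k00 := cpr P (ev C c) (ev X 0 ∩ ev B 0) with hk00
  set k01 := cpr P (ev C c) (ev X 0 ∩ ev B 1) with hk01
  set k10 := cpr P (ev C c) (ev X 1 ∩ ev B 0) with hk10
  set k11 := cpr P (ev C c) (ev X 1 ∩ ev B 1) with hk11
  set p0 := pr P (ev X 0) with hp0
  set p1 := pr P (ev X 1) with hp1
  set r0 := pr P (ev B 0) with hr0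
  set r1 := pr P (ev B 1) with hr1
  -- atoms
  have hA : ∀ x b y : ℝ, (x = 0 ∨ x = 1) → (b = 0 ∨ b = 1) → (y = 0 ∨ y = 1) →
      pr P (ev X x ∩ ev B b ∩ ev C c ∩ ev Y y) =
        pr P (ev X x) * pr P (ev B b) * cpr P (ev C c) (ev X x ∩ ev B b) *
          cpr P (ev Y y) (ev B b) := fun x b y hx hb hy => hfact x b c y hx hb hc hy
  have A000 := hA 0 0 0 (Or.inl rfl) (Or.inl rfl) (Or.inl rfl)
  have A001 := hA 0 0 1 (Or.inl rfl) (Or.inl rfl) (Or.inr rfl)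
  have A010 := hA 0 1 0 (Or.inl rfl) (Or.inr rfl) (Or.inl rfl)
  have A011 := hA 0 1 1 (Or.inl rfl) (Or.inr rfl) (Or.inr rfl)
  have A100 := hA 1 0 0 (Or.inr rfl) (Or.inl rfl) (Or.inl rfl)
  have A101 := hA 1 0 1 (Or.inr rfl) (Or.inl rfl) (Or.inr rfl)
  have A110 := hA 1 1 0 (Or.inr rfl) (Or.inr rfl) (Or.inl rfl)
  have A111 := hA 1 1 1 (Or.inr rfl) (Or.inr rfl) (Or.inr rfl)
  rw [hq1c] at A110
  rw [hq0c] at A100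
  rw [hq1c] at A010
  rw [hq0c] at A000
  -- N x b := pr P ((ev C c ∩ ev X x) ∩ ev B b) = p_x * r_b * k_xb
  have hN : ∀ x b : ℝ, (x = 0 ∨ x = 1) → (b = 0 ∨ b = 1) →
      pr P ((ev C c ∩ ev X x) ∩ ev B b) =
        pr P (ev X x) * pr P (ev B b) * cpr P (ev C c) (ev X x ∩ ev B b) := by
    intro x b hx hb
    rw [pr_split P hY ((mC.inter (meas_ev hX x)).inter (meas_ev hB b)),
      pr_congr P (show (ev C c ∩ ev X x) ∩ ev B b ∩ ev Y 0 =
        ev X x ∩ ev B b ∩ ev C c ∩ ev Y 0 from by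
        ext ω; simp only [ev, Set.mem_inter_iff, Set.mem_setOf_eq]; tauto),
      pr_congr P (show (ev C c ∩ ev X x) ∩ ev B b ∩ ev Y 1 =
        ev X x ∩ ev B b ∩ ev C c ∩ ev Y 1 from by
        ext ω; simp only [ev, Set.mem_inter_iff, Set.mem_setOf_eq]; tauto),
      hA x b 0 hx hb (Or.inl rfl), hA x b 1 hx hb (Or.inr rfl)]
    have hyc : cpr P (ev Y 0) (ev B b) = 1 - cpr P (ev Y 1) (ev B b) := by
      rcases hb with h | h <;> subst h
      · exact hq0c
      · exact hq1c
    rw [hyc]; ring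
  have N00 := hN 0 0 (Or.inl rfl) (Or.inl rfl)
  have N01 := hN 0 1 (Or.inl rfl) (Or.inr rfl)
  have N10 := hN 1 0 (Or.inr rfl) (Or.inl rfl)
  have N11 := hN 1 1 (Or.inr rfl) (Or.inr rfl)
  -- decomposition of pr P (ev C c)
  have hTdec : pr P (ev C c) = p0 * r0 * k00 + p0 * r1 * k01 + p1 * r0 * k10 + p1 * r1 * k11 := by
    rw [pr_split P hX mC, pr_split P hB (mC.inter mX0), pr_split P hB (mC.inter mX1),
      N00, N01, N10, N11]
    ring
  -- pr P (ev C c ∩ ev X 1)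
  have hXdec : pr P (ev C c ∩ ev X 1) = p1 * r0 * k10 + p1 * r1 * k11 := by
    rw [pr_split P hB (mC.inter mX1), N10, N11]
  -- pr P (ev C c ∩ ev B 1)
  have hBdec : pr P (ev C c ∩ ev B 1) = p0 * r1 * k01 + p1 * r1 * k11 := by
    rw [pr_split P hX (mC.inter mB1),
      pr_congr P (show ev C c ∩ ev B 1 ∩ ev X 0 = (ev C c ∩ ev X 0) ∩ ev B 1 from by
        ext ω; simp only [Set.mem_inter_iff]; tauto),
      pr_congr P (show ev C c ∩ ev B 1 ∩ ev X 1 = (ev C c ∩ ev X 1) ∩ ev B 1 from by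
        ext ω; simp only [Set.mem_inter_iff]; tauto),
      N01, N11]
  -- pr P (ev C c ∩ (ev X 1 ∩ ev B 1))
  have hXBdec : pr P (ev C c ∩ (ev X 1 ∩ ev B 1)) = p1 * r1 * k11 := by
    rw [pr_congr P (show ev C c ∩ (ev X 1 ∩ ev B 1) = (ev C c ∩ ev X 1) ∩ ev B 1 from by
        ext ω; simp only [Set.mem_inter_iff]; tauto), N11]
  -- pr P (ev C c ∩ ev Y 1)
  have hYdec : pr P (ev C c ∩ ev Y 1) =
      p0 * r0 * k00 * q0 + p0 * r1 * k01 * q1 + p1 * r0 * k10 * q0 + p1 * r1 * k11 * q1 := by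
    rw [pr_split P hX (mC.inter mY1), pr_split P hB ((mC.inter mY1).inter mX0),
      pr_split P hB ((mC.inter mY1).inter mX1),
      pr_congr P (show ev C c ∩ ev Y 1 ∩ ev X 0 ∩ ev B 0 =
        ev X 0 ∩ ev B 0 ∩ ev C c ∩ ev Y 1 from by
        ext ω; simp only [Set.mem_inter_iff]; tauto),
      pr_congr P (show ev C c ∩ ev Y 1 ∩ ev X 0 ∩ ev B 1 =
        ev X 0 ∩ ev B 1 ∩ ev C c ∩ ev Y 1 from by
        ext ω; simp only [Set.mem_inter_iff]; tauto),
      pr_congr P (show ev C c ∩ ev Y 1 ∩ ev X 1 ∩ ev B 0 =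
        ev X 1 ∩ ev B 0 ∩ ev C c ∩ ev Y 1 from by
        ext ω; simp only [Set.mem_inter_iff]; tauto),
      pr_congr P (show ev C c ∩ ev Y 1 ∩ ev X 1 ∩ ev B 1 =
        ev X 1 ∩ ev B 1 ∩ ev C c ∩ ev Y 1 from by
        ext ω; simp only [Set.mem_inter_iff]; tauto),
      A001, A011, A101, A111]
    ring
  -- pr P (ev C c ∩ (ev X 1 ∩ ev Y 1))
  have hXYdec : pr P (ev C c ∩ (ev X 1 ∩ ev Y 1)) =
      p1 * r0 * k10 * q0 + p1 * r1 * k11 * q1 := by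
    rw [pr_split P hB (mC.inter (mX1.inter mY1)),
      pr_congr P (show ev C c ∩ (ev X 1 ∩ ev Y 1) ∩ ev B 0 =
        ev X 1 ∩ ev B 0 ∩ ev C c ∩ ev Y 1 from by
        ext ω; simp only [Set.mem_inter_iff]; tauto),
      pr_congr P (show ev C c ∩ (ev X 1 ∩ ev Y 1) ∩ ev B 1 =
        ev X 1 ∩ ev B 1 ∩ ev C c ∩ ev Y 1 from by
        ext ω; simp only [Set.mem_inter_iff]; tauto),
      A101, A111]
  -- express the conditional covariances
  have hcov1 : covCond P X Y (ev C c) =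
      pr P (ev C c ∩ (ev X 1 ∩ ev Y 1)) / pr P (ev C c) -
        (pr P (ev C c ∩ ev X 1) / pr P (ev C c)) *
          (pr P (ev C c ∩ ev Y 1) / pr P (ev C c)) := by
    rw [covCond, rcov_bin _ hX hY, pr_cond P mC, pr_cond P mC, pr_cond P mC]
  have hcov2 : covCond P X B (ev C c) =
      pr P (ev C c ∩ (ev X 1 ∩ ev B 1)) / pr P (ev C c) -
        (pr P (ev C c ∩ ev X 1) / pr P (ev C c)) *
          (pr P (ev C c ∩ ev B 1) / pr P (ev C c)) := by
    rw [covCond, rcov_bin _ hX hB, pr_cond P mC, pr_cond P mC, pr_cond P mC]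
  rw [hcov1, hcov2, hXYdec, hXdec, hYdec, hXBdec, hBdec, hTdec]
  rw [hTdec] at hT
  field_simp
  ring
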